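/- Let ω_1,...,ω_k be independent uniform random variables on ℝ/ℤ, 0 < ℓ_j < 1 with ℓ_j ≤ ℓ_1 for all j, I_j = (ω_j, ω_j + ℓ_j), X_j(t) = (1 − 1_{I_j}(t))/(1 − ℓ_j), M_k(t) = ∏_{j=1}^k X_j(t). Then for every 1 < p ≤ 2, t ∈ ℝ/ℤ, and h > 0: E[|M_k(t+h) − M_k(t)|^p] ≤ (2hk/(1 − ℓ_1)) · ∏_{j=1}^k (1 − ℓ_j)^{1−p}. -/

import Mathlib

open MeasureTheory Set

def Aset (c l : ℝ) : Set ℝ := {x : ℝ | Int.fract (c - x) ∈ Set.Ioo 0 l}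

lemma Aset_meas (c l : ℝ) : MeasurableSet (Aset c l) :=
  (measurable_const.sub measurable_id).fract measurableSet_Ioo

lemma fract_shift (c ω : ℝ) : Int.fract (c - ω) = Int.fract (Int.fract c - ω) := by
  have : Int.fract c - ω = c - ω - (⌊c⌋ : ℝ) := by
    rw [← Int.self_sub_floor]; ring
  rw [this, Int.fract_sub_intCast]

lemma fract_add_shift (x h : ℝ) : Int.fract (x + h) = Int.fract (Int.fract x + h) := by
  have : Int.fract x + h = x + h - (⌊x⌋ : ℝ) := by
    rw [← Int.self_sub_floor]; ring
  rw [this, Int.fract_sub_intCast]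

/-- master upper bound -/
lemma key_le (c : ℝ) {S : Set ℝ} (hS : MeasurableSet S) :
    volume {ω : ℝ | ω ∈ Set.Ioo (0:ℝ) 1 ∧ Int.fract (c - ω) ∈ S} ≤ volume S := by
  set c' := Int.fract c with hc'
  have hc0 : 0 ≤ c' := Int.fract_nonneg c
  have hc1 : c' < 1 := Int.fract_lt_one c
  set E1 : Set ℝ := (fun ω => c' - ω) ⁻¹' (S ∩ Set.Ioo 0 c') with hE1
  set E2 : Set ℝ := (fun ω => c' + 1 - ω) ⁻¹' (S ∩ Set.Ioo c' 1) with hE2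
  have hsub : {ω : ℝ | ω ∈ Set.Ioo (0:ℝ) 1 ∧ Int.fract (c - ω) ∈ S} ⊆ E1 ∪ E2 ∪ {c'} := by
    rintro ω ⟨⟨h0, h1⟩, hmem⟩
    rw [fract_shift] at hmem
    rcases lt_trichotomy ω c' with hlt | heq | hgt
    · left; left
      rw [Int.fract_eq_self.mpr ⟨by linarith, by linarith⟩] at hmem
      refine ⟨hmem, ?_⟩
      simp only [Set.mem_preimage, Set.mem_Ioo]
      exact ⟨by linarith, by linarith⟩
    · right; simp [heq]
    · left; right
      have he : Int.fract (c' - ω) = c' + 1 - ω := by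
        have h2 : c' - ω = (c' + 1 - ω) - ((1:ℤ):ℝ) := by push_cast; ring
        rw [h2, Int.fract_sub_intCast, Int.fract_eq_self.mpr ⟨by linarith, by linarith⟩]
      rw [he] at hmem
      refine ⟨hmem, ?_⟩
      simp only [Set.mem_preimage, Set.mem_Ioo]
      exact ⟨by linarith, by linarith⟩
  have hd : Disjoint (S ∩ Set.Ioo 0 c') (S ∩ Set.Ioo c' 1) := by
    rw [Set.disjoint_left]
    rintro x ⟨-, -, hx2⟩ ⟨-, hx3, -⟩; linarith
  calc volume {ω : ℝ | ω ∈ Set.Ioo (0:ℝ) 1 ∧ Int.fract (c - ω) ∈ S}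
      ≤ volume (E1 ∪ E2 ∪ {c'}) := measure_mono hsub
    _ ≤ volume (E1 ∪ E2) + volume {c'} := measure_union_le _ _
    _ ≤ volume E1 + volume E2 + 0 := by
        rw [Real.volume_singleton]; exact add_le_add (measure_union_le _ _) le_rfl
    _ = volume (S ∩ Set.Ioo 0 c') + volume (S ∩ Set.Ioo c' 1) := by
        rw [add_zero, hE1, hE2,
          (Measure.measurePreserving_sub_left volume c').measure_preimage
            (hS.inter measurableSet_Ioo).nullMeasurableSet,
          (Measure.measurePreserving_sub_left volume (c' + 1)).measure_preimage
            (hS.inter measurableSet_Ioo).nullMeasurableSet]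
    _ = volume ((S ∩ Set.Ioo 0 c') ∪ (S ∩ Set.Ioo c' 1)) :=
        (measure_union hd (hS.inter measurableSet_Ioo)).symm
    _ ≤ volume S := by
        refine measure_mono ?_
        rintro x (⟨hx, -⟩ | ⟨hx, -⟩) <;> exact hx

/-- lower bound for arc measure -/
lemma vol_lower (c l : ℝ) (hl0 : 0 < l) (hl1 : l < 1) :
    ENNReal.ofReal l ≤ volume (Aset c l ∩ Set.Ioo 0 1) := by
  set c' := Int.fract c with hc'
  have hc0 : 0 ≤ c' := Int.fract_nonneg c
  have hc1 : c' < 1 := Int.fract_lt_one c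
  rcases le_or_gt l c' with hcase | hcase
  · have hsub : Set.Ioo (c' - l) c' ⊆ Aset c l ∩ Set.Ioo 0 1 := by
      rintro ω ⟨hw1, hw2⟩
      refine ⟨?_, by linarith, by linarith⟩
      show Int.fract (c - ω) ∈ Set.Ioo 0 l
      rw [fract_shift, Int.fract_eq_self.mpr ⟨by linarith, by linarith⟩]
      exact ⟨by linarith, by linarith⟩
    calc ENNReal.ofReal l = volume (Set.Ioo (c' - l) c') := by
          rw [Real.volume_Ioo]; congr 1; ring
      _ ≤ _ := measure_mono hsub
  · have hsub1 : Set.Ioo 0 c' ⊆ Aset c l ∩ Set.Ioo 0 1 := by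
      rintro ω ⟨hw1, hw2⟩
      refine ⟨?_, by linarith, by linarith⟩
      show Int.fract (c - ω) ∈ Set.Ioo 0 l
      rw [fract_shift, Int.fract_eq_self.mpr ⟨by linarith, by linarith⟩]
      exact ⟨by linarith, by linarith⟩
    have hsub2 : Set.Ioo (c' + 1 - l) 1 ⊆ Aset c l ∩ Set.Ioo 0 1 := by
      rintro ω ⟨hw1, hw2⟩
      have hgt : 0 < ω := by linarith
      refine ⟨?_, hgt, hw2⟩
      show Int.fract (c - ω) ∈ Set.Ioo 0 l
      rw [fract_shift]
      have h2 : c' - ω = (c' + 1 - ω) - ((1:ℤ):ℝ) := by push_cast; ring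
      rw [h2, Int.fract_sub_intCast, Int.fract_eq_self.mpr ⟨by linarith, by linarith⟩]
      exact ⟨by linarith, by linarith⟩
    have hdisj : Disjoint (Set.Ioo (0:ℝ) c') (Set.Ioo (c' + 1 - l) 1) := by
      rw [Set.disjoint_left]
      rintro x ⟨-, hx2⟩ ⟨hx3, -⟩; linarith
    calc ENNReal.ofReal l = ENNReal.ofReal c' + ENNReal.ofReal (l - c') := by
          rw [← ENNReal.ofReal_add hc0 (by linarith)]; congr 1; ring
      _ = volume (Set.Ioo (0:ℝ) c') + volume (Set.Ioo (c' + 1 - l) 1) := by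
          rw [Real.volume_Ioo, Real.volume_Ioo]; congr 2 <;> ring
      _ = volume (Set.Ioo (0:ℝ) c' ∪ Set.Ioo (c' + 1 - l) 1) :=
          (measure_union hdisj measurableSet_Ioo).symm
      _ ≤ _ := measure_mono (Set.union_subset hsub1 hsub2)
/-- complement measure bound -/
lemma mu1_compl_le (c l : ℝ) (hl0 : 0 < l) (hl1 : l < 1) :
    (volume.restrict (Set.Ioo (0:ℝ) 1)) (Aset c l)ᶜ ≤ ENNReal.ofReal (1 - l) := by
  rw [Measure.restrict_apply (Aset_meas c l).compl]
  have hsplit : volume (Aset c l ∩ Set.Ioo 0 1) + volume ((Aset c l)ᶜ ∩ Set.Ioo 0 1) = 1 := by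
    rw [← measure_union ?_ ((Aset_meas c l).compl.inter measurableSet_Ioo)]
    · rw [← Set.union_inter_distrib_right, Set.union_compl_self, Set.univ_inter, Real.volume_Ioo]
      norm_num
    · exact (disjoint_compl_right.mono inf_le_left inf_le_left)
  have hlow := vol_lower c l hl0 hl1
  have h1 : ENNReal.ofReal l + volume ((Aset c l)ᶜ ∩ Set.Ioo 0 1) ≤ 1 := by
    calc ENNReal.ofReal l + volume ((Aset c l)ᶜ ∩ Set.Ioo 0 1)
        ≤ volume (Aset c l ∩ Set.Ioo 0 1) + volume ((Aset c l)ᶜ ∩ Set.Ioo 0 1) := by gcongr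
      _ = 1 := hsplit
  have h2 : (1:ENNReal) = ENNReal.ofReal (1 - l) + ENNReal.ofReal l := by
    rw [← ENNReal.ofReal_add (by linarith) (by linarith)]
    norm_num
  rw [h2] at h1
  rw [add_comm] at h1
  exact ENNReal.le_of_add_le_add_right ENNReal.ofReal_ne_top h1
lemma Sb_subset (h l : ℝ) (hh0 : 0 < h) (hh1 : h < 1) (hl1 : l < 1) :
    {u : ℝ | u ∈ Set.Ioo 0 l ∧ Int.fract (u + h) ∉ Set.Ioo 0 l}
      ⊆ Set.Ico (l - h) l ∪ {1 - h} := by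
  rintro u ⟨⟨hu0, hul⟩, hnot⟩
  rcases lt_trichotomy (u + h) 1 with hc | hc | hc
  · left
    rw [Int.fract_eq_self.mpr ⟨by linarith, hc⟩] at hnot
    have hcon : ¬ (0 < u + h ∧ u + h < l) := by simpa [Set.mem_Ioo] using hnot
    have hge : l ≤ u + h := by
      by_contra hlt; push_neg at hlt; exact hcon ⟨by linarith, hlt⟩
    exact ⟨by linarith, hul⟩
  · right; simp only [Set.mem_singleton_iff]; linarith
  · exfalso
    have h1 : Int.fract (u + h - 1) = u + h - 1 :=
      Int.fract_eq_self.mpr ⟨by linarith, by linarith⟩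
    have he : Int.fract (u + h) = u + h - 1 := by
      calc Int.fract (u + h) = Int.fract (u + h - ((1:ℤ):ℝ)) := (Int.fract_sub_intCast _ 1).symm
        _ = u + h - 1 := by rw [Int.cast_one]; exact h1
    rw [he] at hnot
    have hcon : ¬ (0 < u + h - 1 ∧ u + h - 1 < l) := by simpa [Set.mem_Ioo] using hnot
    have hge : l ≤ u + h - 1 := by
      by_contra hlt; push_neg at hlt; exact hcon ⟨by linarith, hlt⟩
    linarith

lemma Sc_subset (h l : ℝ) (hh0 : 0 < h) (hh1 : h < 1) :
    {u : ℝ | u ∈ Set.Ico 0 1 ∧ (Int.fract (u + h) ∈ Set.Ioo 0 l ∧ u ∉ Set.Ioo 0 l)}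
      ⊆ {0} ∪ Set.Ioo (1 - h) 1 := by
  rintro u ⟨⟨hu0, hu1⟩, hfr, hnotu⟩
  rcases eq_or_lt_of_le hu0 with heq | hpos
  · left; simp [← heq]
  · right
    have hul : l ≤ u := by
      by_contra hlt; push_neg at hlt; exact hnotu ⟨hpos, hlt⟩
    rcases lt_trichotomy (u + h) 1 with hc | hc | hc
    · exfalso
      rw [Int.fract_eq_self.mpr ⟨by linarith, hc⟩] at hfr
      rcases hfr with ⟨-, h2⟩; linarith
    · exfalso
      rw [show u + h = ((1:ℤ):ℝ) by push_cast; linarith] at hfr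
      rw [Int.fract_intCast] at hfr
      exact lt_irrefl 0 hfr.1
    · exact ⟨by linarith, hu1⟩

lemma mu1_diff_le1 (t h l : ℝ) (hh : 0 < h) (hl0 : 0 < l) (hl1 : l < 1) :
    (volume.restrict (Set.Ioo (0:ℝ) 1)) (Aset t l \ Aset (t + h) l) ≤ ENNReal.ofReal h := by
  rw [Measure.restrict_apply ((Aset_meas t l).diff (Aset_meas (t + h) l))]
  rcases le_or_gt 1 h with hbig | hsmall
  · calc volume ((Aset t l \ Aset (t + h) l) ∩ Set.Ioo 0 1)
        ≤ volume (Set.Ioo (0:ℝ) 1) := measure_mono Set.inter_subset_right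
      _ = ENNReal.ofReal 1 := by rw [Real.volume_Ioo]; norm_num
      _ ≤ ENNReal.ofReal h := ENNReal.ofReal_le_ofReal hbig
  · have hkey : ∀ ω : ℝ, Int.fract (t + h - ω) = Int.fract (Int.fract (t - ω) + h) := by
      intro ω; rw [show t + h - ω = (t - ω) + h by ring, fract_add_shift]
    have hset : (Aset t l \ Aset (t + h) l) ∩ Set.Ioo 0 1
        = {ω : ℝ | ω ∈ Set.Ioo (0:ℝ) 1 ∧ Int.fract (t - ω) ∈
            {u : ℝ | u ∈ Set.Ioo 0 l ∧ Int.fract (u + h) ∉ Set.Ioo 0 l}} := by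
      ext ω
      simp only [Set.mem_inter_iff, Set.mem_diff, Set.mem_setOf_eq, Aset, hkey]
      tauto
    rw [hset]
    have hSmeas : MeasurableSet {u : ℝ | u ∈ Set.Ioo 0 l ∧ Int.fract (u + h) ∉ Set.Ioo 0 l} := by
      refine measurableSet_Ioo.inter ?_
      exact ((measurable_id.add_const h).fract measurableSet_Ioo).compl
    calc volume {ω : ℝ | ω ∈ Set.Ioo (0:ℝ) 1 ∧ Int.fract (t - ω) ∈ _} ≤ _ := key_le t hSmeas
      _ ≤ volume (Set.Ico (l - h) l ∪ {1 - h}) := measure_mono (Sb_subset h l hh hsmall hl1)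
      _ ≤ volume (Set.Ico (l - h) l) + volume ({1 - h} : Set ℝ) := measure_union_le _ _
      _ ≤ ENNReal.ofReal h := by
          rw [Real.volume_Ico, Real.volume_singleton, add_zero]
          exact ENNReal.ofReal_le_ofReal (by linarith)

lemma mu1_diff_le2 (t h l : ℝ) (hh : 0 < h) (hl0 : 0 < l) (hl1 : l < 1) :
    (volume.restrict (Set.Ioo (0:ℝ) 1)) (Aset (t + h) l \ Aset t l) ≤ ENNReal.ofReal h := by
  rw [Measure.restrict_apply ((Aset_meas (t + h) l).diff (Aset_meas t l))]
  rcases le_or_gt 1 h with hbig | hsmall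
  · calc volume ((Aset (t + h) l \ Aset t l) ∩ Set.Ioo 0 1)
        ≤ volume (Set.Ioo (0:ℝ) 1) := measure_mono Set.inter_subset_right
      _ = ENNReal.ofReal 1 := by rw [Real.volume_Ioo]; norm_num
      _ ≤ ENNReal.ofReal h := ENNReal.ofReal_le_ofReal hbig
  · have hkey : ∀ ω : ℝ, Int.fract (t + h - ω) = Int.fract (Int.fract (t - ω) + h) := by
      intro ω; rw [show t + h - ω = (t - ω) + h by ring, fract_add_shift]
    have hset : (Aset (t + h) l \ Aset t l) ∩ Set.Ioo 0 1
        = {ω : ℝ | ω ∈ Set.Ioo (0:ℝ) 1 ∧ Int.fract (t - ω) ∈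
            {u : ℝ | u ∈ Set.Ico 0 1 ∧ (Int.fract (u + h) ∈ Set.Ioo 0 l ∧ u ∉ Set.Ioo 0 l)}} := by
      ext ω
      simp only [Set.mem_inter_iff, Set.mem_diff, Set.mem_setOf_eq, Aset, hkey]
      have hico : Int.fract (t - ω) ∈ Set.Ico (0:ℝ) 1 :=
        ⟨Int.fract_nonneg _, Int.fract_lt_one _⟩
      tauto
    rw [hset]
    have hSmeas : MeasurableSet {u : ℝ | u ∈ Set.Ico 0 1 ∧
        (Int.fract (u + h) ∈ Set.Ioo 0 l ∧ u ∉ Set.Ioo 0 l)} := by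
      refine measurableSet_Ico.inter ?_
      exact ((measurable_id.add_const h).fract measurableSet_Ioo).inter
        measurableSet_Ioo.compl
    calc volume {ω : ℝ | ω ∈ Set.Ioo (0:ℝ) 1 ∧ Int.fract (t - ω) ∈ _} ≤ _ := key_le t hSmeas
      _ ≤ volume (({0} : Set ℝ) ∪ Set.Ioo (1 - h) 1) :=
          measure_mono (Sc_subset h l hh hsmall)
      _ ≤ volume (({0}:Set ℝ)) + volume (Set.Ioo (1 - h) 1) := measure_union_le _ _
      _ ≤ ENNReal.ofReal h := by
          rw [Real.volume_Ioo, Real.volume_singleton, zero_add]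
          exact ENNReal.ofReal_le_ofReal (by linarith)
lemma prod01 {k : ℕ} (x : Fin k → ℝ) (hx : ∀ i, x i = 0 ∨ x i = 1) :
    (∏ i, x i) = 0 ∨ (∏ i, x i) = 1 := by
  refine Finset.prod_induction x (fun r => r = 0 ∨ r = 1) ?_ (Or.inr rfl) (fun i _ => hx i)
  rintro a b (ha | ha) (hb | hb) <;> simp [ha, hb]

lemma pointwise_bound {k : ℕ} (p : ℝ) (hp : 0 < p) (x y : Fin k → ℝ)
    (hx : ∀ i, x i = 0 ∨ x i = 1) (hy : ∀ i, y i = 0 ∨ y i = 1) :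
    |(∏ i, x i) - ∏ i, y i| ^ p
      ≤ (∑ j, (1 - y j) * ∏ i, x i) + ∑ j, (1 - x j) * ∏ i, y i := by
  have hx1 : ∀ i, 0 ≤ 1 - x i := by intro i; rcases hx i with h | h <;> simp [h]
  have hy1 : ∀ i, 0 ≤ 1 - y i := by intro i; rcases hy i with h | h <;> simp [h]
  have hxn : ∀ i, 0 ≤ x i := by intro i; rcases hx i with h | h <;> simp [h]
  have hyn : ∀ i, 0 ≤ y i := by intro i; rcases hy i with h | h <;> simp [h]
  have hpx : 0 ≤ ∏ i, x i := Finset.prod_nonneg fun i _ => hxn i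
  have hpy : 0 ≤ ∏ i, y i := Finset.prod_nonneg fun i _ => hyn i
  have hrhs1 : 0 ≤ ∑ j, (1 - y j) * ∏ i, x i :=
    Finset.sum_nonneg fun j _ => mul_nonneg (hy1 j) hpx
  have hrhs2 : 0 ≤ ∑ j, (1 - x j) * ∏ i, y i :=
    Finset.sum_nonneg fun j _ => mul_nonneg (hx1 j) hpy
  rcases prod01 x hx with hX | hX <;> rcases prod01 y hy with hY | hY
  · have habs : |(∏ i, x i) - ∏ i, y i| ^ p = 0 := by
      rw [hX, hY]; norm_num [Real.zero_rpow hp.ne']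
    rw [habs]; exact add_nonneg hrhs1 hrhs2
  · -- X = 0, Y = 1 : find j with x j = 0
    have hex : ∃ j, x j = 0 := by
      by_contra hc; push_neg at hc
      have : ∀ i ∈ Finset.univ, x i = 1 := fun i _ => (hx i).resolve_left (hc i)
      rw [Finset.prod_eq_one this] at hX; norm_num at hX
    obtain ⟨j, hj⟩ := hex
    have habs : |(∏ i, x i) - ∏ i, y i| ^ p = 1 := by rw [hX, hY]; norm_num
    rw [habs]
    have : (1:ℝ) = (1 - x j) * ∏ i, y i := by rw [hj, hY]; ring
    calc (1:ℝ) = (1 - x j) * ∏ i, y i := this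
      _ ≤ ∑ j', (1 - x j') * ∏ i, y i :=
          Finset.single_le_sum (fun i _ => mul_nonneg (hx1 i) hpy) (Finset.mem_univ j)
      _ ≤ _ := le_add_of_nonneg_left hrhs1
  · have hex : ∃ j, y j = 0 := by
      by_contra hc; push_neg at hc
      have : ∀ i ∈ Finset.univ, y i = 1 := fun i _ => (hy i).resolve_left (hc i)
      rw [Finset.prod_eq_one this] at hY; norm_num at hY
    obtain ⟨j, hj⟩ := hex
    have habs : |(∏ i, x i) - ∏ i, y i| ^ p = 1 := by rw [hX, hY]; norm_num
    rw [habs]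
    have : (1:ℝ) = (1 - y j) * ∏ i, x i := by rw [hj, hX]; ring
    calc (1:ℝ) = (1 - y j) * ∏ i, x i := this
      _ ≤ ∑ j', (1 - y j') * ∏ i, x i :=
          Finset.single_le_sum (fun i _ => mul_nonneg (hy1 i) hpx) (Finset.mem_univ j)
      _ ≤ _ := le_add_of_nonneg_right hrhs2
  · have habs : |(∏ i, x i) - ∏ i, y i| ^ p = 0 := by
      rw [hX, hY]; norm_num [Real.zero_rpow hp.ne']
    rw [habs]; exact add_nonneg hrhs1 hrhs2
theorem stmt_11 (k : ℕ) (hk : 0 < k) (ℓ : ℕ → ℝ) (hℓ0 : ∀ j, 0 < ℓ j) (hℓ1 : ∀ j, ℓ j < 1)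
    (hℓmax : ∀ j, ℓ j ≤ ℓ 0) (p t h : ℝ) (hp1 : 1 < p) (hp2 : p ≤ 2) (hh : 0 < h) :
    ∫ ω : Fin k → ℝ,
      |(∏ j : Fin k,
          ((1 - (if Int.fract (t + h - ω j) ∈ Set.Ioo 0 (ℓ j.1) then (1:ℝ) else 0)) / (1 - ℓ j.1))) -
       (∏ j : Fin k,
          ((1 - (if Int.fract (t - ω j) ∈ Set.Ioo 0 (ℓ j.1) then (1:ℝ) else 0)) / (1 - ℓ j.1)))| ^ p
      ∂ MeasureTheory.Measure.pi (fun _ => MeasureTheory.volume.restrict (Set.Ioo (0:ℝ) 1))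
      ≤ (2 * h * k / (1 - ℓ 0)) * ∏ j : Fin k, (1 - ℓ j.1) ^ (1 - p) := by
  classical
  have hpos : ∀ n : ℕ, (0:ℝ) < 1 - ℓ n := fun n => by linarith [hℓ1 n]
  have hpos0 : (0:ℝ) < 1 - ℓ 0 := hpos 0
  haveI : IsProbabilityMeasure (volume.restrict (Set.Ioo (0:ℝ) 1)) := by
    constructor
    rw [Measure.restrict_apply MeasurableSet.univ, Set.univ_inter, Real.volume_Ioo]
    norm_num
  set μ : Measure (Fin k → ℝ) :=
    Measure.pi (fun _ : Fin k => volume.restrict (Set.Ioo (0:ℝ) 1)) with hμdef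
  haveI : IsProbabilityMeasure μ := by rw [hμdef]; infer_instance
  set C : ℝ := ∏ j : Fin k, (1 - ℓ j.1)⁻¹ with hCdef
  have hCpos : 0 < C := Finset.prod_pos fun j _ => inv_pos.mpr (hpos j.1)
  set D1 : Fin k → Set (Fin k → ℝ) := fun j => Set.univ.pi
    (fun i => if i = j then Aset t (ℓ j.1) \ Aset (t + h) (ℓ j.1)
      else (Aset (t + h) (ℓ i.1))ᶜ) with hD1def
  set D2 : Fin k → Set (Fin k → ℝ) := fun j => Set.univ.pi
    (fun i => if i = j then Aset (t + h) (ℓ j.1) \ Aset t (ℓ j.1)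
      else (Aset t (ℓ i.1))ᶜ) with hD2def
  have hD1m : ∀ j, MeasurableSet (D1 j) := by
    intro j
    rw [hD1def]
    refine MeasurableSet.pi Set.countable_univ fun i _ => ?_
    by_cases hij : i = j
    · rw [if_pos hij]; exact (Aset_meas _ _).diff (Aset_meas _ _)
    · rw [if_neg hij]; exact (Aset_meas _ _).compl
  have hD2m : ∀ j, MeasurableSet (D2 j) := by
    intro j
    rw [hD2def]
    refine MeasurableSet.pi Set.countable_univ fun i _ => ?_
    by_cases hij : i = j
    · rw [if_pos hij]; exact (Aset_meas _ _).diff (Aset_meas _ _)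
    · rw [if_neg hij]; exact (Aset_meas _ _).compl
  set F : (Fin k → ℝ) → ℝ := fun ω => C ^ p *
    ((∑ j : Fin k, (D1 j).indicator (fun _ => (1:ℝ)) ω) +
     (∑ j : Fin k, (D2 j).indicator (fun _ => (1:ℝ)) ω)) with hFdef
  have hind1 : ∀ j, Integrable ((D1 j).indicator (fun _ => (1:ℝ))) μ :=
    fun j => (integrable_const (1:ℝ)).indicator (hD1m j)
  have hind2 : ∀ j, Integrable ((D2 j).indicator (fun _ => (1:ℝ))) μ :=
    fun j => (integrable_const (1:ℝ)).indicator (hD2m j)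
  have hsum1 : Integrable (fun ω => ∑ j : Fin k, (D1 j).indicator (fun _ => (1:ℝ)) ω) μ :=
    integrable_finset_sum _ fun j _ => hind1 j
  have hsum2 : Integrable (fun ω => ∑ j : Fin k, (D2 j).indicator (fun _ => (1:ℝ)) ω) μ :=
    integrable_finset_sum _ fun j _ => hind2 j
  have hFint : Integrable F μ := by
    rw [hFdef]
    exact (hsum1.add hsum2).const_mul _
  -- pointwise bound
  have hpoint : ∀ ω : Fin k → ℝ,
      |(∏ j : Fin k,
          ((1 - (if Int.fract (t + h - ω j) ∈ Set.Ioo 0 (ℓ j.1) then (1:ℝ) else 0)) / (1 - ℓ j.1))) -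
       (∏ j : Fin k,
          ((1 - (if Int.fract (t - ω j) ∈ Set.Ioo 0 (ℓ j.1) then (1:ℝ) else 0)) / (1 - ℓ j.1)))| ^ p
      ≤ F ω := by
    intro ω
    set x : Fin k → ℝ := fun i =>
      1 - (if Int.fract (t + h - ω i) ∈ Set.Ioo 0 (ℓ i.1) then (1:ℝ) else 0) with hxdef
    set y : Fin k → ℝ := fun i =>
      1 - (if Int.fract (t - ω i) ∈ Set.Ioo 0 (ℓ i.1) then (1:ℝ) else 0) with hydef
    have hx01 : ∀ i, x i = 0 ∨ x i = 1 := by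
      intro i; rw [hxdef]; dsimp only; split <;> norm_num
    have hy01 : ∀ i, y i = 0 ∨ y i = 1 := by
      intro i; rw [hydef]; dsimp only; split <;> norm_num
    have hprod1 : (∏ j : Fin k,
        ((1 - (if Int.fract (t + h - ω j) ∈ Set.Ioo 0 (ℓ j.1) then (1:ℝ) else 0)) / (1 - ℓ j.1)))
        = (∏ j, x j) * C := by
      calc (∏ j : Fin k,
          ((1 - (if Int.fract (t + h - ω j) ∈ Set.Ioo 0 (ℓ j.1) then (1:ℝ) else 0)) / (1 - ℓ j.1)))
          = ∏ j : Fin k, (x j * (1 - ℓ j.1)⁻¹) :=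
            Finset.prod_congr rfl fun j _ => div_eq_mul_inv _ _
        _ = (∏ j, x j) * C := Finset.prod_mul_distrib
    have hprod2 : (∏ j : Fin k,
        ((1 - (if Int.fract (t - ω j) ∈ Set.Ioo 0 (ℓ j.1) then (1:ℝ) else 0)) / (1 - ℓ j.1)))
        = (∏ j, y j) * C := by
      calc (∏ j : Fin k,
          ((1 - (if Int.fract (t - ω j) ∈ Set.Ioo 0 (ℓ j.1) then (1:ℝ) else 0)) / (1 - ℓ j.1)))
          = ∏ j : Fin k, (y j * (1 - ℓ j.1)⁻¹) :=
            Finset.prod_congr rfl fun j _ => div_eq_mul_inv _ _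
        _ = (∏ j, y j) * C := Finset.prod_mul_distrib
    have e1 : ∀ j, (1 - y j) * ∏ i, x i = (D1 j).indicator (fun _ => (1:ℝ)) ω := by
      intro j
      by_cases hw : ω ∈ D1 j
      · rw [Set.indicator_of_mem hw]
        have hw' := Set.mem_univ_pi.mp (by rw [hD1def] at hw; exact hw)
        have hyj : (1 : ℝ) - y j = 1 := by
          have hj' := hw' j
          rw [if_pos rfl] at hj'
          have hmem : Int.fract (t - ω j) ∈ Set.Ioo 0 (ℓ j.1) := hj'.1
          rw [hydef]; dsimp only; rw [if_pos hmem]; ring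
        have hxall : ∀ i ∈ Finset.univ, x i = 1 := by
          intro i _
          have hi' := hw' i
          by_cases hij : i = j
          · subst hij
            rw [if_pos rfl] at hi'
            have hnmem : Int.fract (t + h - ω i) ∉ Set.Ioo 0 (ℓ i.1) := hi'.2
            rw [hxdef]; dsimp only; rw [if_neg hnmem]; ring
          · rw [if_neg hij] at hi'
            have hnmem : Int.fract (t + h - ω i) ∉ Set.Ioo 0 (ℓ i.1) := hi'
            rw [hxdef]; dsimp only; rw [if_neg hnmem]; ring
        rw [Finset.prod_eq_one hxall, hyj, one_mul]
      · rw [Set.indicator_of_notMem hw]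
        have hnall : ¬ ∀ i, ω i ∈ (if i = j then Aset t (ℓ j.1) \ Aset (t + h) (ℓ j.1)
            else (Aset (t + h) (ℓ i.1))ᶜ) := by
          intro hc
          exact hw (by rw [hD1def]; exact Set.mem_univ_pi.mpr hc)
        push_neg at hnall
        obtain ⟨i, hi⟩ := hnall
        by_cases hij : i = j
        · subst hij
          rw [if_pos rfl] at hi
          by_cases hA : Int.fract (t + h - ω i) ∈ Set.Ioo 0 (ℓ i.1)
          · have hxi : x i = 0 := by rw [hxdef]; dsimp only; rw [if_pos hA]; ring
            rw [Finset.prod_eq_zero (Finset.mem_univ i) hxi, mul_zero]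
          · have hB : Int.fract (t - ω i) ∉ Set.Ioo 0 (ℓ i.1) := fun hB => hi ⟨hB, hA⟩
            have hyi : (1:ℝ) - y i = 0 := by rw [hydef]; dsimp only; rw [if_neg hB]; ring
            rw [hyi, zero_mul]
        · rw [if_neg hij] at hi
          have hA : Int.fract (t + h - ω i) ∈ Set.Ioo 0 (ℓ i.1) := by
            by_contra hc; exact hi hc
          have hxi : x i = 0 := by rw [hxdef]; dsimp only; rw [if_pos hA]; ring
          rw [Finset.prod_eq_zero (Finset.mem_univ i) hxi, mul_zero]
    have e2 : ∀ j, (1 - x j) * ∏ i, y i = (D2 j).indicator (fun _ => (1:ℝ)) ω := by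
      intro j
      by_cases hw : ω ∈ D2 j
      · rw [Set.indicator_of_mem hw]
        have hw' := Set.mem_univ_pi.mp (by rw [hD2def] at hw; exact hw)
        have hxj : (1 : ℝ) - x j = 1 := by
          have hj' := hw' j
          rw [if_pos rfl] at hj'
          have hmem : Int.fract (t + h - ω j) ∈ Set.Ioo 0 (ℓ j.1) := hj'.1
          rw [hxdef]; dsimp only; rw [if_pos hmem]; ring
        have hyall : ∀ i ∈ Finset.univ, y i = 1 := by
          intro i _
          have hi' := hw' i
          by_cases hij : i = j
          · subst hij
            rw [if_pos rfl] at hi'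
            have hnmem : Int.fract (t - ω i) ∉ Set.Ioo 0 (ℓ i.1) := hi'.2
            rw [hydef]; dsimp only; rw [if_neg hnmem]; ring
          · rw [if_neg hij] at hi'
            have hnmem : Int.fract (t - ω i) ∉ Set.Ioo 0 (ℓ i.1) := hi'
            rw [hydef]; dsimp only; rw [if_neg hnmem]; ring
        rw [Finset.prod_eq_one hyall, hxj, one_mul]
      · rw [Set.indicator_of_notMem hw]
        have hnall : ¬ ∀ i, ω i ∈ (if i = j then Aset (t + h) (ℓ j.1) \ Aset t (ℓ j.1)
            else (Aset t (ℓ i.1))ᶜ) := by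
          intro hc
          exact hw (by rw [hD2def]; exact Set.mem_univ_pi.mpr hc)
        push_neg at hnall
        obtain ⟨i, hi⟩ := hnall
        by_cases hij : i = j
        · subst hij
          rw [if_pos rfl] at hi
          by_cases hA : Int.fract (t - ω i) ∈ Set.Ioo 0 (ℓ i.1)
          · have hyi : y i = 0 := by rw [hydef]; dsimp only; rw [if_pos hA]; ring
            rw [Finset.prod_eq_zero (Finset.mem_univ i) hyi, mul_zero]
          · have hB : Int.fract (t + h - ω i) ∉ Set.Ioo 0 (ℓ i.1) := fun hB => hi ⟨hB, hA⟩
            have hxi : (1:ℝ) - x i = 0 := by rw [hxdef]; dsimp only; rw [if_neg hB]; ring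
            rw [hxi, zero_mul]
        · rw [if_neg hij] at hi
          have hA : Int.fract (t - ω i) ∈ Set.Ioo 0 (ℓ i.1) := by
            by_contra hc; exact hi hc
          have hyi : y i = 0 := by rw [hydef]; dsimp only; rw [if_pos hA]; ring
          rw [Finset.prod_eq_zero (Finset.mem_univ i) hyi, mul_zero]
    rw [hprod1, hprod2, ← sub_mul, abs_mul, abs_of_pos hCpos,
      Real.mul_rpow (abs_nonneg _) hCpos.le]
    have hbd := pointwise_bound p (by linarith : (0:ℝ) < p) x y hx01 hy01
    calc |(∏ i, x i) - ∏ i, y i| ^ p * C ^ p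
        ≤ ((∑ j, (1 - y j) * ∏ i, x i) + ∑ j, (1 - x j) * ∏ i, y i) * C ^ p := by
          apply mul_le_mul_of_nonneg_right hbd (Real.rpow_nonneg hCpos.le p)
      _ = F ω := by
          rw [hFdef]
          dsimp only
          rw [mul_comm]
          congr 1
          rw [Finset.sum_congr rfl fun j _ => e1 j, Finset.sum_congr rfl fun j _ => e2 j]
  -- integral computation
  have hiF : ∫ ω, F ω ∂μ = C ^ p * ((∑ j : Fin k, (μ (D1 j)).toReal) +
      (∑ j : Fin k, (μ (D2 j)).toReal)) := by
    rw [hFdef]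
    dsimp only
    rw [integral_const_mul, integral_add hsum1 hsum2,
      integral_finset_sum _ (fun j _ => hind1 j), integral_finset_sum _ (fun j _ => hind2 j)]
    congr 1
    congr 1
    · exact Finset.sum_congr rfl fun j _ => by
        rw [integral_indicator_const (1:ℝ) (hD1m j), smul_eq_mul, mul_one, Measure.real]
    · exact Finset.sum_congr rfl fun j _ => by
        rw [integral_indicator_const (1:ℝ) (hD2m j), smul_eq_mul, mul_one, Measure.real]
  set P : ℝ := ∏ i : Fin k, (1 - ℓ i.1) with hPdef
  have hPnn : 0 ≤ P := by
    rw [hPdef]; exact Finset.prod_nonneg fun i _ => (hpos i.1).le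
  -- measure bounds
  have hμD1 : ∀ j, (μ (D1 j)).toReal ≤ h / (1 - ℓ 0) * P := by
    intro j
    have hpi : μ (D1 j) = ∏ i : Fin k, (volume.restrict (Set.Ioo (0:ℝ) 1))
        (if i = j then Aset t (ℓ j.1) \ Aset (t + h) (ℓ j.1)
          else (Aset (t + h) (ℓ i.1))ᶜ) := by
      rw [hμdef, hD1def]; exact Measure.pi_pi _ _
    rw [hpi, ENNReal.toReal_prod]
    have hfac : ∀ i : Fin k, ((volume.restrict (Set.Ioo (0:ℝ) 1))
        (if i = j then Aset t (ℓ j.1) \ Aset (t + h) (ℓ j.1)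
          else (Aset (t + h) (ℓ i.1))ᶜ)).toReal ≤ (if i = j then h else 1 - ℓ i.1) := by
      intro i
      by_cases hij : i = j
      · subst hij
        rw [if_pos rfl, if_pos rfl]
        exact ENNReal.toReal_le_of_le_ofReal hh.le
          (mu1_diff_le1 t h (ℓ i.1) hh (hℓ0 i.1) (hℓ1 i.1))
      · rw [if_neg hij, if_neg hij]
        exact ENNReal.toReal_le_of_le_ofReal (hpos i.1).le
          (mu1_compl_le (t + h) (ℓ i.1) (hℓ0 i.1) (hℓ1 i.1))
    calc ∏ i : Fin k, ((volume.restrict (Set.Ioo (0:ℝ) 1)) _).toReal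
        ≤ ∏ i : Fin k, (if i = j then h else 1 - ℓ i.1) :=
          Finset.prod_le_prod (fun i _ => ENNReal.toReal_nonneg) (fun i _ => hfac i)
      _ = h * ∏ i ∈ Finset.univ.erase j, (1 - ℓ i.1) := by
          rw [← Finset.mul_prod_erase Finset.univ _ (Finset.mem_univ j), if_pos rfl]
          congr 1
          exact Finset.prod_congr rfl fun i hi => if_neg (Finset.ne_of_mem_erase hi)
      _ ≤ h / (1 - ℓ 0) * P := by
          rw [hPdef, ← Finset.mul_prod_erase Finset.univ (fun i : Fin k => 1 - ℓ i.1)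
            (Finset.mem_univ j), ← mul_assoc]
          apply mul_le_mul_of_nonneg_right ?_
            (Finset.prod_nonneg fun i _ => (hpos i.1).le)
          rw [div_mul_eq_mul_div, le_div_iff₀ hpos0]
          have := hℓmax j.1
          nlinarith [hh.le]
  have hμD2 : ∀ j, (μ (D2 j)).toReal ≤ h / (1 - ℓ 0) * P := by
    intro j
    have hpi : μ (D2 j) = ∏ i : Fin k, (volume.restrict (Set.Ioo (0:ℝ) 1))
        (if i = j then Aset (t + h) (ℓ j.1) \ Aset t (ℓ j.1)
          else (Aset t (ℓ i.1))ᶜ) := by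
      rw [hμdef, hD2def]; exact Measure.pi_pi _ _
    rw [hpi, ENNReal.toReal_prod]
    have hfac : ∀ i : Fin k, ((volume.restrict (Set.Ioo (0:ℝ) 1))
        (if i = j then Aset (t + h) (ℓ j.1) \ Aset t (ℓ j.1)
          else (Aset t (ℓ i.1))ᶜ)).toReal ≤ (if i = j then h else 1 - ℓ i.1) := by
      intro i
      by_cases hij : i = j
      · subst hij
        rw [if_pos rfl, if_pos rfl]
        exact ENNReal.toReal_le_of_le_ofReal hh.le
          (mu1_diff_le2 t h (ℓ i.1) hh (hℓ0 i.1) (hℓ1 i.1))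
      · rw [if_neg hij, if_neg hij]
        exact ENNReal.toReal_le_of_le_ofReal (hpos i.1).le
          (mu1_compl_le t (ℓ i.1) (hℓ0 i.1) (hℓ1 i.1))
    calc ∏ i : Fin k, ((volume.restrict (Set.Ioo (0:ℝ) 1)) _).toReal
        ≤ ∏ i : Fin k, (if i = j then h else 1 - ℓ i.1) :=
          Finset.prod_le_prod (fun i _ => ENNReal.toReal_nonneg) (fun i _ => hfac i)
      _ = h * ∏ i ∈ Finset.univ.erase j, (1 - ℓ i.1) := by
          rw [← Finset.mul_prod_erase Finset.univ _ (Finset.mem_univ j), if_pos rfl]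
          congr 1
          exact Finset.prod_congr rfl fun i hi => if_neg (Finset.ne_of_mem_erase hi)
      _ ≤ h / (1 - ℓ 0) * P := by
          rw [hPdef, ← Finset.mul_prod_erase Finset.univ (fun i : Fin k => 1 - ℓ i.1)
            (Finset.mem_univ j), ← mul_assoc]
          apply mul_le_mul_of_nonneg_right ?_
            (Finset.prod_nonneg fun i _ => (hpos i.1).le)
          rw [div_mul_eq_mul_div, le_div_iff₀ hpos0]
          have := hℓmax j.1
          nlinarith [hh.le]
  have hS1 : ∑ j : Fin k, (μ (D1 j)).toReal ≤ k * (h / (1 - ℓ 0) * P) := by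
    calc ∑ j : Fin k, (μ (D1 j)).toReal ≤ ∑ _j : Fin k, h / (1 - ℓ 0) * P :=
          Finset.sum_le_sum fun j _ => hμD1 j
      _ = k * (h / (1 - ℓ 0) * P) := by
          rw [Finset.sum_const, Finset.card_univ, Fintype.card_fin, nsmul_eq_mul]
  have hS2 : ∑ j : Fin k, (μ (D2 j)).toReal ≤ k * (h / (1 - ℓ 0) * P) := by
    calc ∑ j : Fin k, (μ (D2 j)).toReal ≤ ∑ _j : Fin k, h / (1 - ℓ 0) * P :=
          Finset.sum_le_sum fun j _ => hμD2 j
      _ = k * (h / (1 - ℓ 0) * P) := by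
          rw [Finset.sum_const, Finset.card_univ, Fintype.card_fin, nsmul_eq_mul]
  have hCP : C ^ p * P = ∏ i : Fin k, (1 - ℓ i.1) ^ (1 - p) := by
    rw [hCdef, hPdef,
      ← Real.finset_prod_rpow Finset.univ (fun j : Fin k => (1 - ℓ j.1)⁻¹)
        (fun i _ => inv_nonneg.mpr (hpos i.1).le) p,
      ← Finset.prod_mul_distrib]
    refine Finset.prod_congr rfl fun i _ => ?_
    have hpi : (0:ℝ) < 1 - ℓ i.1 := hpos i.1
    have hsplit : (1 - ℓ i.1) ^ (1 - p) = (1 - ℓ i.1) ^ (-p) * (1 - ℓ i.1) ^ (1:ℝ) := by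
      rw [← Real.rpow_add hpi]; ring_nf
    rw [hsplit, Real.rpow_one, Real.rpow_neg hpi.le, Real.inv_rpow hpi.le]
  calc ∫ ω : Fin k → ℝ,
      |(∏ j : Fin k,
          ((1 - (if Int.fract (t + h - ω j) ∈ Set.Ioo 0 (ℓ j.1) then (1:ℝ) else 0)) / (1 - ℓ j.1))) -
       (∏ j : Fin k,
          ((1 - (if Int.fract (t - ω j) ∈ Set.Ioo 0 (ℓ j.1) then (1:ℝ) else 0)) / (1 - ℓ j.1)))| ^ p ∂μ
      ≤ ∫ ω, F ω ∂μ := by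
        refine integral_mono_of_nonneg (Filter.Eventually.of_forall fun ω => ?_) hFint
          (Filter.Eventually.of_forall fun ω => hpoint ω)
        positivity
    _ = C ^ p * ((∑ j : Fin k, (μ (D1 j)).toReal) + (∑ j : Fin k, (μ (D2 j)).toReal)) := hiF
    _ ≤ C ^ p * (k * (h / (1 - ℓ 0) * P) + k * (h / (1 - ℓ 0) * P)) := by
        apply mul_le_mul_of_nonneg_left (add_le_add hS1 hS2) (Real.rpow_nonneg hCpos.le p)
    _ = (2 * h * k / (1 - ℓ 0)) * (C ^ p * P) := by ring
    _ = (2 * h * k / (1 - ℓ 0)) * ∏ j : Fin k, (1 - ℓ j.1) ^ (1 - p) := by rw [hCP]
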